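/- arXiv:1910.04134 — 2 statements merged into one kernel-verified Lean document; each statement's English description precedes it below -/
import Mathlib

section
/- Let Z be a random variable with values in [μ_min, μ_max] and mean μ > 0, where μ_min ≥ 0. Then Var[Z] ≤ μ · p, where p = min{μ_max − μ_min, μ_max + μ_min − 2√(μ_min μ_max)}. -/
open MeasureTheory ProbabilityTheory

/-- if 0 ≤ μ_min ≤ Z ≤ μ_max a.s. and μ = E[Z] > 0, then
Var[Z] ≤ μ · p where p = min{μ_max − μ_min, μ_max + μ_min − 2√(μ_min μ_max)}. -/
theorem stmt6 {Ω : Type*} [MeasureSpace Ω] [IsProbabilityMeasure (ℙ : Measure Ω)]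
    (Z : Ω → ℝ) (hZ : Measurable Z) (μmin μmax : ℝ) (hmin : 0 ≤ μmin)
    (hbound : ∀ᵐ ω ∂(ℙ : Measure Ω), Z ω ∈ Set.Icc μmin μmax)
    (hμ : 0 < ∫ ω, Z ω ∂(ℙ : Measure Ω)) :
    variance Z ℙ ≤ (∫ ω, Z ω ∂(ℙ : Measure Ω)) *
      min (μmax - μmin) (μmax + μmin - 2 * Real.sqrt (μmin * μmax)) := by
  set μ := ∫ ω, Z ω ∂(ℙ : Measure Ω) with hμdef
  have hbd : ∀ᵐ ω ∂(ℙ : Measure Ω), ‖Z ω‖ ≤ μmax := by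
    filter_upwards [hbound] with ω hω
    rw [Real.norm_eq_abs, abs_le]
    exact ⟨le_trans (by linarith [hω.2, hω.1]) hω.1, hω.2⟩
  have hmem : MemLp Z 2 ℙ := MemLp.of_bound hZ.aestronglyMeasurable μmax hbd
  have hint : Integrable Z ℙ := hmem.integrable one_le_two
  have hsq : Integrable (fun ω => Z ω ^ 2) ℙ := hmem.integrable_sq
  have hμle : μ ≤ μmax := by
    calc μ ≤ ∫ _, μmax ∂(ℙ : Measure Ω) :=
          integral_mono_ae hint (integrable_const _) (by filter_upwards [hbound] with ω hω using hω.2)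
    _ = μmax := by simp
  have hμge : μmin ≤ μ := by
    calc μmin = ∫ _, μmin ∂(ℙ : Measure Ω) := by simp
    _ ≤ μ := integral_mono_ae (integrable_const _) hint (by filter_upwards [hbound] with ω hω using hω.1)
  have h0 : 0 ≤ ∫ ω, (Z ω - μmin) * (μmax - Z ω) ∂(ℙ : Measure Ω) :=
    integral_nonneg_of_ae (by
      filter_upwards [hbound] with ω hω
      exact mul_nonneg (by linarith [hω.1]) (by linarith [hω.2]))
  have heq : ∫ ω, (Z ω - μmin) * (μmax - Z ω) ∂(ℙ : Measure Ω)
      = (μmin + μmax) * μ - μmin * μmax - ∫ ω, Z ω ^ 2 ∂(ℙ : Measure Ω) := by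
    have hfun : (fun ω => (Z ω - μmin) * (μmax - Z ω))
        = fun ω => (μmin + μmax) * Z ω - μmin * μmax - Z ω ^ 2 := by
      funext ω; ring
    have h1 : Integrable (fun ω => (μmin + μmax) * Z ω - μmin * μmax) ℙ :=
      (hint.const_mul _).sub (integrable_const _)
    rw [hfun, integral_sub h1 hsq, integral_sub (hint.const_mul _) (integrable_const _),
      integral_const_mul]
    simp [hμdef]
  have hkey : ∫ ω, Z ω ^ 2 ∂(ℙ : Measure Ω) ≤ (μmin + μmax) * μ - μmin * μmax := by
    linarith [h0, heq.symm.le, heq.le]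
  have hvar : variance Z ℙ = (∫ ω, Z ω ^ 2 ∂(ℙ : Measure Ω)) - μ ^ 2 := by
    rw [variance_eq_sub hmem]; rfl
  have hs : Real.sqrt (μmin * μmax) * Real.sqrt (μmin * μmax) = μmin * μmax :=
    Real.mul_self_sqrt (mul_nonneg hmin (le_trans hμ.le hμle))
  rw [hvar, mul_min_of_nonneg _ _ hμ.le]
  apply le_min
  · nlinarith [hkey, mul_nonneg (sub_nonneg.2 hμge) (sub_nonneg.2 hμle), hμ]
  · nlinarith [hkey, sq_nonneg (μ - Real.sqrt (μmin * μmax)), hs, hμ,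
      Real.sqrt_nonneg (μmin * μmax)]
end

section
/- Let Z_1, ..., Z_T be i.i.d. random variables in [μ_min, μ_max] with mean μ and Var[Z_j] ≤ pμ, and let μ̂ = (1/T)∑ Z_j. For δ ∈ (0,1), set c = ln(1/δ) and ρ = μ_max − μ_min. Then with probability at least 1 − δ, μ ≥ min{ μ̂ − ρc/(3T), μ̂ − (1/T)(ρc/3 − cp + √((ρc/3 − cp)² + 2Tpc μ̂)) }. -/
open MeasureTheory ProbabilityTheory Finset

open Real Nat

lemma lemA {u : ℝ} (hu : u ≤ 0) : Real.exp u ≤ 1 + u + u^2/2 := by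
  set f : ℝ → ℝ := fun x => Real.exp x - 1 - x - x^2/2 with hf
  have hd : ∀ x : ℝ, HasDerivAt f (Real.exp x - 1 - x) x := by
    intro x
    have h : HasDerivAt f (Real.exp x - 1 - (2:ℕ) * x ^ (2-1) / 2) x :=
      (((Real.hasDerivAt_exp x).sub_const 1).sub (hasDerivAt_id x)).sub
        ((hasDerivAt_pow 2 x).div_const 2)
    simpa using h.congr_deriv (by push_cast; ring)
  have hmono : Monotone f := by
    apply monotone_of_deriv_nonneg
    · exact fun x => (hd x).differentiableAt
    · intro x
      rw [(hd x).deriv]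
      linarith [Real.add_one_le_exp x]
  have h0 : f u ≤ f 0 := hmono hu
  simp [hf] at h0
  linarith

lemma fact_ge (n : ℕ) : 2 * 3^n ≤ (n+2)! := by
  induction n with
  | zero => simp [Nat.factorial]
  | succ k ih =>
    calc 2 * 3^(k+1) = 3 * (2*3^k) := by ring
    _ ≤ 3 * (k+2)! := by omega
    _ ≤ (k+3) * (k+2)! := Nat.mul_le_mul_right _ (by omega)
    _ = (k+3)! := rfl

lemma lemB {u b : ℝ} (h0 : 0 ≤ u) (hub : u ≤ b) (hb : b < 3) :
    Real.exp u ≤ 1 + u + u^2 * (1/(2*(1 - b/3))) := by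
  have hu3 : u/3 < 1 := by linarith
  have hu3' : (0:ℝ) ≤ u/3 := by linarith
  have hb3 : (0:ℝ) < 1 - b/3 := by linarith
  have hub3 : 1 - b/3 ≤ 1 - u/3 := by linarith
  have hsum : Summable (fun n => u^n / n !) := Real.summable_pow_div_factorial u
  have hexp : Real.exp u = ∑' n : ℕ, u^n / n ! := by
    rw [Real.exp_eq_exp_ℝ, NormedSpace.exp_eq_tsum_div]
  have hsplit : Real.exp u = (1 + u) + ∑' n : ℕ, u^(n+2) / (n+2)! := by
    rw [hexp, ← Summable.sum_add_tsum_nat_add 2 hsum]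
    congr 1
    simp [Finset.sum_range_succ, Nat.factorial]
  have hgeom : Summable (fun n : ℕ => u^2/2 * (u/3)^n) :=
    (summable_geometric_of_lt_one hu3' hu3).mul_left _
  have hterm : ∀ n : ℕ, u^(n+2) / (n+2)! ≤ u^2/2 * (u/3)^n := by
    intro n
    have h1 : u^(n+2) / ((n+2)! : ℝ) ≤ u^(n+2) / (2 * 3^n) := by
      apply div_le_div_of_nonneg_left (by positivity) (by positivity)
      exact_mod_cast fact_ge n
    calc u^(n+2) / ((n+2)! : ℝ) ≤ u^(n+2) / (2*3^n) := h1
      _ = u^2/2 * (u/3)^n := by rw [div_pow]; ring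
  have htail : ∑' n : ℕ, u^(n+2) / (n+2)! ≤ u^2/2 * (1 - u/3)⁻¹ := by
    calc ∑' n : ℕ, u^(n+2) / (n+2)!
        ≤ ∑' n : ℕ, u^2/2 * (u/3)^n :=
          Summable.tsum_le_tsum hterm ((summable_nat_add_iff 2).mpr hsum) hgeom
      _ = u^2/2 * (1 - u/3)⁻¹ := by
          rw [tsum_mul_left, tsum_geometric_of_lt_one hu3' hu3]
  have hlast : u^2/2 * (1 - u/3)⁻¹ ≤ u^2 * (1/(2*(1 - b/3))) := by
    have h2 : (1 - u/3)⁻¹ ≤ (1 - b/3)⁻¹ := by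
      apply inv_anti₀ hb3 hub3
    calc u^2/2 * (1 - u/3)⁻¹ ≤ u^2/2 * (1 - b/3)⁻¹ := by
          apply mul_le_mul_of_nonneg_left h2 (by positivity)
      _ = u^2 * (1/(2*(1 - b/3))) := by field_simp
  rw [hsplit]
  linarith

lemma lemC {t ρ y : ℝ} (ht : 0 ≤ t) (hρ : 0 ≤ ρ) (htρ : t*ρ < 3) (hy : y ≤ ρ) :
    Real.exp (t*y) ≤ 1 + t*y + (t*y)^2 * (1/(2*(1 - t*ρ/3))) := by
  have htρ0 : 0 ≤ t*ρ := mul_nonneg ht hρ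
  have h3 : 0 < 1 - t*ρ/3 := by linarith
  rcases le_or_gt (t*y) 0 with h|h
  · have hK : 1/2 ≤ 1/(2*(1 - t*ρ/3)) := by
      rw [div_le_div_iff₀ (by norm_num) (by linarith)]
      linarith
    have := lemA h
    nlinarith [sq_nonneg (t*y)]
  · exact lemB h.le (mul_le_mul_of_nonneg_left hy ht) htρ

lemma mgf_bd {Ω : Type*} [MeasureSpace Ω] [IsProbabilityMeasure (ℙ : Measure Ω)]
    {Y : Ω → ℝ} (hm : Measurable Y) {ρ t v : ℝ} (ht : 0 ≤ t) (hρ : 0 ≤ ρ) (htρ : t*ρ < 3)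
    (hb : ∀ᵐ ω ∂(ℙ : Measure Ω), Y ω ∈ Set.Icc (-ρ) ρ)
    (hmean : ∫ ω, Y ω ∂(ℙ : Measure Ω) = 0)
    (hv : ∫ ω, (Y ω)^2 ∂(ℙ : Measure Ω) ≤ v) :
    mgf Y ℙ t ≤ Real.exp (t^2 * (1/(2*(1-t*ρ/3))) * v) := by
  set K := 1/(2*(1-t*ρ/3)) with hK
  have h3 : 0 < 1 - t*ρ/3 := by nlinarith [mul_nonneg ht hρ]
  have hK0 : 0 ≤ K := by positivity
  have hint1 : Integrable Y ℙ := by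
    refine Integrable.mono' (integrable_const ρ) hm.aestronglyMeasurable ?_
    filter_upwards [hb] with ω h
    rw [Real.norm_eq_abs]; exact abs_le.mpr ⟨h.1, h.2⟩
  have hint2 : Integrable (fun ω => (Y ω)^2) ℙ := by
    refine Integrable.mono' (integrable_const (ρ^2)) ((hm.pow_const 2).aestronglyMeasurable) ?_
    filter_upwards [hb] with ω h
    rw [Real.norm_eq_abs, abs_pow]
    exact pow_le_pow_left₀ (abs_nonneg _) (abs_le.mpr ⟨h.1, h.2⟩) 2
  have hint3 : Integrable (fun ω => Real.exp (t * Y ω)) ℙ := by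
    refine Integrable.mono' (integrable_const (Real.exp (t*ρ)))
      ((hm.const_mul t).exp.aestronglyMeasurable) ?_
    filter_upwards [hb] with ω h
    rw [Real.norm_eq_abs, abs_of_pos (Real.exp_pos _), Real.exp_le_exp]
    exact mul_le_mul_of_nonneg_left h.2 ht
  have hintR : Integrable (fun ω => 1 + t * Y ω + t^2*K*(Y ω)^2) ℙ :=
    ((integrable_const 1).add (hint1.const_mul t)).add (hint2.const_mul (t^2*K))
  have hptw : ∀ᵐ ω ∂(ℙ : Measure Ω),
      Real.exp (t * Y ω) ≤ 1 + t * Y ω + t^2*K*(Y ω)^2 := by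
    filter_upwards [hb] with ω h
    have := lemC ht hρ htρ h.2
    calc Real.exp (t * Y ω) ≤ 1 + t*(Y ω) + (t*(Y ω))^2 * K := this
      _ = 1 + t * Y ω + t^2*K*(Y ω)^2 := by ring
  have hmgf : mgf Y ℙ t ≤ ∫ ω, (1 + t * Y ω + t^2*K*(Y ω)^2) ∂ℙ :=
    integral_mono_ae hint3 hintR hptw
  have hcalc : ∫ ω, (1 + t * Y ω + t^2*K*(Y ω)^2) ∂(ℙ : Measure Ω)
      = 1 + t^2*K*(∫ ω, (Y ω)^2 ∂(ℙ : Measure Ω)) := by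
    have e1 : ∫ ω, (1 + t*Y ω + t^2*K*(Y ω)^2) ∂(ℙ : Measure Ω)
        = (∫ ω, (1 + t*Y ω) ∂(ℙ : Measure Ω)) + ∫ ω, t^2*K*(Y ω)^2 ∂(ℙ : Measure Ω) :=
      integral_add ((integrable_const 1).add (hint1.const_mul t)) (hint2.const_mul (t^2*K))
    have e2 : ∫ ω, (1 + t*Y ω) ∂(ℙ : Measure Ω)
        = (∫ _, (1:ℝ) ∂(ℙ : Measure Ω)) + ∫ ω, t*Y ω ∂(ℙ : Measure Ω) :=
      integral_add (integrable_const 1) (hint1.const_mul t)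
    rw [e1, e2, integral_const, integral_const_mul, integral_const_mul, hmean]
    simp
  calc mgf Y ℙ t ≤ 1 + t^2*K*(∫ ω, (Y ω)^2 ∂(ℙ : Measure Ω)) := by rw [← hcalc]; exact hmgf
    _ ≤ 1 + t^2*K*v := by nlinarith [mul_nonneg (sq_nonneg t) hK0]
    _ ≤ Real.exp (t^2*K*v) := by linarith [Real.add_one_le_exp (t^2*K*v)]

lemma detlem (T : ℕ) (hT : 0 < T) (μ p c ρ S' : ℝ) (hc : 0 ≤ c) (hρ : 0 ≤ ρ)
    (hpμ : 0 ≤ p*μ)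
    (hS : S' - T*μ ≤ ρ*c/3 + Real.sqrt ((ρ*c/3)^2 + 2*c*(T*(p*μ)))) :
    μ ≥ min (S'/T - ρ*c/(3*T))
      (S'/T - (1/T) * (ρ*c/3 - c*p + Real.sqrt ((ρ*c/3 - c*p)^2 + 2*T*p*c*(S'/T)))) := by
  have hT' : (0:ℝ) < T := by exact_mod_cast hT
  set S := S' - T*μ with hSdef
  have hrad : (0:ℝ) ≤ (ρ*c/3)^2 + 2*c*(T*(p*μ)) := by positivity
  set x := Real.sqrt ((ρ*c/3)^2 + 2*c*(T*(p*μ))) with hx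
  have hx0 : 0 ≤ x := Real.sqrt_nonneg _
  have hx2 : x^2 = (ρ*c/3)^2 + 2*c*(T*(p*μ)) := Real.sq_sqrt hrad
  rw [ge_iff_le, min_le_iff]
  rcases le_or_gt S (ρ*c/3) with hcase | hcase
  · left
    have he : S'/T - ρ*c/(3*T) = (S' - ρ*c/3)/T := by ring
    rw [he, div_le_iff₀ hT']
    nlinarith
  · right
    have hR : (ρ*c/3 - c*p)^2 + 2*(T:ℝ)*p*c*(S'/T) = (ρ*c/3 - c*p)^2 + 2*p*c*S' := by
      field_simp
    set A := ρ*c/3 - c*p with hA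
    have key : S ≤ A + Real.sqrt (A^2 + 2*T*p*c*(S'/T)) := by
      rw [hR]
      have hquad : S^2 - 2*(ρ*c/3)*S - 2*c*((T:ℝ)*(p*μ)) ≤ 0 := by
        nlinarith [mul_nonneg (sub_nonneg.mpr hcase.le) (sub_nonneg.mpr hS)]
      have hsq : (S - A)^2 ≤ A^2 + 2*p*c*S' := by
        have hS' : S' = S + T*μ := by rw [hSdef]; ring
        rw [hS', hA]
        nlinarith [hquad]
      linarith [Real.le_sqrt_of_sq_le hsq]
    have he : S'/T - (1/T) * (A + Real.sqrt (A^2 + 2*T*p*c*(S'/T)))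
        = (S' - (A + Real.sqrt (A^2 + 2*T*p*c*(S'/T))))/T := by ring
    rw [he, div_le_iff₀ hT']
    nlinarith [key]

lemma alg (c ρ v x : ℝ) (hc : 0 < c) (hρ : 0 < ρ) (hv : 0 < v) (hx0 : 0 ≤ x)
    (hx2 : x^2 = (ρ*c/3)^2 + 2*c*v) :
    0 ≤ (ρ*c/3 + x) / (v + ρ*(ρ*c/3 + x)/3) ∧
    ((ρ*c/3 + x) / (v + ρ*(ρ*c/3 + x)/3))*ρ < 3 ∧
    -((ρ*c/3 + x) / (v + ρ*(ρ*c/3 + x)/3))*(ρ*c/3 + x)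
      + ((ρ*c/3 + x) / (v + ρ*(ρ*c/3 + x)/3))^2
        * (1/(2*(1-((ρ*c/3 + x) / (v + ρ*(ρ*c/3 + x)/3))*ρ/3))) * v = -c := by
  set L := ρ*c/3 + x with hL
  have hLpos : 0 < L := by rw [hL]; positivity
  set D := v + ρ*L/3 with hD
  have hDpos : 0 < D := by rw [hD]; positivity
  refine ⟨le_of_lt (div_pos hLpos hDpos), ?_, ?_⟩
  · rw [div_mul_eq_mul_div, div_lt_iff₀ hDpos, hD]
    nlinarith
  · have hL2 : L^2 = 2*c*D := by
      rw [hL, hD, hL]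
      linear_combination hx2
    have h1K : 1 - (L/D)*ρ/3 = v/D := by
      rw [hD]
      field_simp
      ring
    rw [h1K]
    have e1 : (1/(2*(v/D))) = D/(2*v) := by
      rw [div_eq_div_iff (by positivity : (0:ℝ) < 2*(v/D)).ne' (by positivity : (0:ℝ) < 2*v).ne']
      field_simp
    rw [e1]
    have e2 : -(L/D)*L + (L/D)^2*(D/(2*v))*v = -(L^2)/(2*D) := by
      field_simp
      ring
    rw [e2, hL2]
    rw [div_eq_iff (by positivity : (0:ℝ) < 2*D).ne']
    ring


/-- Lemma 5, lower-bound function: for i.i.d. Z_1,...,Z_T in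
[μ_min, μ_max] with mean μ and Var[Z_j] ≤ pμ, empirical mean μ̂, δ ∈ (0,1),
c = ln(1/δ), ρ = μ_max − μ_min, with probability at least 1 − δ,
μ ≥ min{ μ̂ − ρc/(3T), μ̂ − (1/T)(ρc/3 − cp + √((ρc/3 − cp)² + 2Tpc μ̂)) }. -/
theorem stmt10 {Ω : Type*} [MeasureSpace Ω] [IsProbabilityMeasure (ℙ : Measure Ω)]
    (T : ℕ) (hT : 0 < T) (Z : Fin T → Ω → ℝ) (hmeas : ∀ j, Measurable (Z j))
    (hindep : iIndepFun Z ℙ)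
    (hident : ∀ j, IdentDistrib (Z j) (Z ⟨0, hT⟩) ℙ ℙ)
    (μmin μmax μ p : ℝ)
    (hbound : ∀ j, ∀ᵐ ω ∂(ℙ : Measure Ω), Z j ω ∈ Set.Icc μmin μmax)
    (hmean : ∀ j, ∫ ω, Z j ω ∂(ℙ : Measure Ω) = μ)
    (hvar : ∀ j, variance (Z j) ℙ ≤ p * μ)
    (δ : ℝ) (hδ : δ ∈ Set.Ioo (0:ℝ) 1) (c ρ : ℝ)
    (hc : c = Real.log (1 / δ)) (hρ : ρ = μmax - μmin) :
    (ℙ {ω | μ ≥ min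
        ((∑ j, Z j ω) / T - ρ * c / (3 * T))
        ((∑ j, Z j ω) / T - (1 / T) * (ρ * c / 3 - c * p +
          Real.sqrt ((ρ * c / 3 - c * p) ^ 2 +
            2 * T * p * c * ((∑ j, Z j ω) / T))))}).toReal ≥ 1 - δ := by
  obtain ⟨hδ0, hδ1⟩ := hδ
  have hT' : (0:ℝ) < T := by exact_mod_cast hT
  have hcpos : 0 < c := by
    rw [hc]; exact Real.log_pos (one_lt_one_div hδ0 hδ1)
  have hexpc : Real.exp (-c) = δ := by
    rw [hc, one_div, Real.log_inv, neg_neg, Real.exp_log hδ0]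
  have hLp : ∀ j, MemLp (Z j) 2 ℙ := fun j =>
    memLp_of_bounded (hbound j) (hmeas j).aestronglyMeasurable 2
  have hint : ∀ j, Integrable (Z j) ℙ := fun j => (hLp j).integrable one_le_two
  set j0 : Fin T := ⟨0, hT⟩ with hj0
  have hμlb : μmin ≤ μ := by
    have h1 : ∫ _, μmin ∂(ℙ : Measure Ω) ≤ ∫ ω, Z j0 ω ∂(ℙ : Measure Ω) :=
      integral_mono_ae (integrable_const _) (hint j0)
        ((hbound j0).mono fun ω h => h.1)
    rwa [integral_const, probReal_univ, one_smul, hmean j0] at h1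
  have hμub : μ ≤ μmax := by
    have h1 : ∫ ω, Z j0 ω ∂(ℙ : Measure Ω) ≤ ∫ _, μmax ∂(ℙ : Measure Ω) :=
      integral_mono_ae (hint j0) (integrable_const _)
        ((hbound j0).mono fun ω h => h.2)
    rwa [integral_const, probReal_univ, one_smul, hmean j0] at h1
  have hρ0 : 0 ≤ ρ := by rw [hρ]; linarith
  have hpμ0 : 0 ≤ p*μ := le_trans (variance_nonneg _ _) (hvar j0)
  set x := Real.sqrt ((ρ*c/3)^2 + 2*c*((T:ℝ)*(p*μ))) with hxdef
  have hx0 : 0 ≤ x := Real.sqrt_nonneg _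
  have hx2 : x^2 = (ρ*c/3)^2 + 2*c*((T:ℝ)*(p*μ)) := Real.sq_sqrt (by positivity)
  set lam := ρ*c/3 + x with hlam
  have hlam0 : 0 ≤ lam := by rw [hlam]; positivity
  set W : Ω → ℝ := fun ω => ∑ j, Z j ω with hW
  have hWmeas : Measurable W := Finset.measurable_sum _ (fun j _ => hmeas j)
  set G : Set Ω := {ω | W ω - T*μ ≤ lam} with hG
  have hGmeas : MeasurableSet G := measurableSet_le (hWmeas.sub_const _) measurable_const
  -- G is contained in the target event
  have hsub : G ⊆ {ω | μ ≥ min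
        ((∑ j, Z j ω) / T - ρ * c / (3 * T))
        ((∑ j, Z j ω) / T - (1 / T) * (ρ * c / 3 - c * p +
          Real.sqrt ((ρ * c / 3 - c * p) ^ 2 +
            2 * T * p * c * ((∑ j, Z j ω) / T))))} := by
    intro ω hω
    exact detlem T hT μ p c ρ (∑ j, Z j ω) hcpos.le hρ0 hpμ0 hω
  -- the complement of G has probability at most δ
  have hGc : (ℙ Gᶜ).toReal ≤ δ := by
    have hdegcase : ∀ (hdeg : ∀ j, Z j =ᵐ[(ℙ : Measure Ω)] fun _ => μ),
        (ℙ Gᶜ).toReal ≤ δ := by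
      intro hdeg
      have hae : ∀ᵐ ω ∂(ℙ : Measure Ω), ω ∈ G := by
        have hall : ∀ᵐ ω ∂(ℙ : Measure Ω), ∀ j, Z j ω = μ := ae_all_iff.mpr hdeg
        filter_upwards [hall] with ω h
        have hsum : W ω = T*μ := by
          rw [hW]
          simp only [h, Finset.sum_const, Finset.card_univ, Fintype.card_fin, nsmul_eq_mul]
        show W ω - T*μ ≤ lam
        rw [hsum]
        simpa using hlam0
      have h0 : ℙ Gᶜ = 0 := ae_iff.mp hae
      simp [h0]
      linarith
    rcases eq_or_lt_of_le hpμ0 with hdeg1 | hvpos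
    · -- degenerate: variance zero
      refine hdegcase fun j => ?_
      have hv0 : variance (Z j) ℙ = 0 :=
        le_antisymm (le_trans (hvar j) hdeg1.symm.le) (variance_nonneg _ _)
      have hev : evariance (Z j) ℙ = 0 := by
        have hne : evariance (Z j) ℙ ≠ ⊤ := (hLp j).evariance_lt_top.ne
        rw [variance] at hv0
        rcases (ENNReal.toReal_eq_zero_iff _).mp hv0 with h | h
        · exact h
        · exact absurd h hne
      have h2 := (evariance_eq_zero_iff (hmeas j).aemeasurable).mp hev
      filter_upwards [h2] with ω hω
      rw [hω, hmean j]
    rcases eq_or_lt_of_le hρ0 with hρdeg | hρpos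
    · -- ρ = 0 : all Z j are a.e. equal to μ
      have hmm : μmax = μmin := by rw [hρ] at hρdeg; linarith
      have hμeq : μ = μmin := le_antisymm (hmm ▸ hμub) hμlb
      refine hdegcase fun j => ?_
      filter_upwards [hbound j] with ω h
      rw [hμeq]
      exact le_antisymm (hmm ▸ h.2) h.1
    -- main case : 0 < ρ and 0 < p*μ : Chernoff/Bernstein
    obtain ⟨ht0, htρ, hexp0⟩ :=
      alg c ρ ((T:ℝ)*(p*μ)) x hcpos hρpos (by positivity) hx0 hx2
    rw [← hlam] at ht0 htρ hexp0
    set t := lam / ((T:ℝ)*(p*μ) + ρ*lam/3) with htdef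
    set K := 1/(2*(1-t*ρ/3)) with hKdef
    set Y : Fin T → Ω → ℝ := fun j ω => Z j ω - μ with hY
    have hYmeas : ∀ j, Measurable (Y j) := fun j => (hmeas j).sub measurable_const
    have hYb : ∀ j, ∀ᵐ ω ∂(ℙ : Measure Ω), Y j ω ∈ Set.Icc (-ρ) ρ := by
      intro j
      filter_upwards [hbound j] with ω h
      have h1 : Y j ω = Z j ω - μ := rfl
      rw [Set.mem_Icc, h1, hρ]
      constructor
      · linarith [h.1]
      · linarith [h.2]
    have hYmean : ∀ j, ∫ ω, Y j ω ∂(ℙ : Measure Ω) = 0 := by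
      intro j
      show ∫ ω, (Z j ω - μ) ∂(ℙ : Measure Ω) = 0
      rw [integral_sub (hint j) (integrable_const μ), hmean j, integral_const,
        probReal_univ, one_smul]
      exact sub_self μ
    have hYsq : ∀ j, ∫ ω, (Y j ω)^2 ∂(ℙ : Measure Ω) ≤ p*μ := by
      intro j
      have hveq := variance_eq_integral (μ := ℙ) (hmeas j).aemeasurable
      simp only [Pi.pow_apply, Pi.sub_apply, hmean j] at hveq
      calc ∫ ω, (Y j ω)^2 ∂(ℙ : Measure Ω)
          = ∫ ω, (Z j ω - μ)^2 ∂(ℙ : Measure Ω) := rfl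
        _ = variance (Z j) ℙ := hveq.symm
        _ ≤ p*μ := hvar j
    have hmgf : ∀ j, mgf (Y j) ℙ t ≤ Real.exp (t^2 * K * (p*μ)) := fun j =>
      mgf_bd (hYmeas j) ht0 hρ0 htρ (hYb j) (hYmean j) (hYsq j)
    have hYindep : iIndepFun Y ℙ :=
      hindep.comp (fun _ x => x - μ) (fun _ => measurable_id.sub measurable_const)
    have hint3 : ∀ j, Integrable (fun ω => Real.exp (t * (Y j ω))) ℙ := by
      intro j
      refine Integrable.mono' (integrable_const (Real.exp (t*ρ)))
        (((hYmeas j).const_mul t).exp.aestronglyMeasurable) ?_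
      filter_upwards [hYb j] with ω h
      rw [Real.norm_eq_abs, abs_of_pos (Real.exp_pos _), Real.exp_le_exp]
      exact mul_le_mul_of_nonneg_left h.2 ht0
    have hintS : Integrable (fun ω => Real.exp (t * (∑ i, Y i) ω)) ℙ :=
      hYindep.integrable_exp_mul_sum hYmeas (fun i _ => hint3 i)
    have hchern := measure_ge_le_exp_mul_mgf (X := ∑ i, Y i) (μ := ℙ) lam ht0 hintS
    have hprod : mgf (∑ i, Y i) ℙ t ≤ Real.exp ((T:ℝ)*(t^2 * K * (p*μ))) := by
      rw [hYindep.mgf_sum hYmeas]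
      calc ∏ i, mgf (Y i) ℙ t ≤ ∏ _i : Fin T, Real.exp (t^2 * K * (p*μ)) :=
          Finset.prod_le_prod (fun i _ => mgf_nonneg) (fun i _ => hmgf i)
        _ = Real.exp (t^2 * K * (p*μ)) ^ T := by
            rw [Finset.prod_const, Finset.card_univ, Fintype.card_fin]
        _ = Real.exp ((T:ℝ)*(t^2 * K * (p*μ))) := by
            rw [← Real.exp_nat_mul]
    have hexp_eq : -t*lam + (T:ℝ)*(t^2 * K * (p*μ)) = -c := by
      have h1 : (T:ℝ)*(t^2 * K * (p*μ)) = t^2 * K * ((T:ℝ)*(p*μ)) := by ring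
      rw [h1]
      exact hexp0
    have htail : (ℙ {ω | lam ≤ (∑ i, Y i) ω}).toReal ≤ δ := by
      calc (ℙ {ω | lam ≤ (∑ i, Y i) ω}).toReal
          ≤ Real.exp (-t*lam) * mgf (∑ i, Y i) ℙ t := hchern
        _ ≤ Real.exp (-t*lam) * Real.exp ((T:ℝ)*(t^2 * K * (p*μ))) :=
            mul_le_mul_of_nonneg_left hprod (le_of_lt (Real.exp_pos _))
        _ = Real.exp (-t*lam + (T:ℝ)*(t^2 * K * (p*μ))) := (Real.exp_add _ _).symm
        _ = δ := by rw [hexp_eq, hexpc]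
    have hsub2 : Gᶜ ⊆ {ω | lam ≤ (∑ i, Y i) ω} := by
      intro ω hω
      simp only [hG, Set.mem_compl_iff, Set.mem_setOf_eq, not_le] at hω
      have heq : (∑ i, Y i) ω = W ω - T*μ := by
        rw [Finset.sum_apply, hW]
        simp only [hY]
        rw [Finset.sum_sub_distrib, Finset.sum_const, Finset.card_univ, Fintype.card_fin,
          nsmul_eq_mul]
      show lam ≤ (∑ i, Y i) ω
      rw [heq]
      linarith
    calc (ℙ Gᶜ).toReal ≤ (ℙ {ω | lam ≤ (∑ i, Y i) ω}).toReal :=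
        ENNReal.toReal_mono (measure_ne_top _ _) (measure_mono hsub2)
      _ ≤ δ := htail
  -- conclude
  have hsplit : (ℙ G).toReal + (ℙ Gᶜ).toReal = 1 := by
    rw [← ENNReal.toReal_add (measure_ne_top _ _) (measure_ne_top _ _),
      measure_add_measure_compl hGmeas]
    simp
  have hfin : (ℙ G).toReal ≤ (ℙ {ω | μ ≥ min
        ((∑ j, Z j ω) / T - ρ * c / (3 * T))
        ((∑ j, Z j ω) / T - (1 / T) * (ρ * c / 3 - c * p +
          Real.sqrt ((ρ * c / 3 - c * p) ^ 2 +
            2 * T * p * c * ((∑ j, Z j ω) / T))))}).toReal :=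
    ENNReal.toReal_mono (measure_ne_top _ _) (measure_mono hsub)
  linarith
end
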